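/- Let U, V ∈ SU(N). The map A ↦ U Ā V on SU(N) (where Ā is entrywise complex conjugation) is involutive if and only if either (1) U = U^T and V = V^T, or (2) U = −U^T, V = −V^T, and N is even. -/

import Mathlib

open Matrix

namespace Stmt12Aux

variable {N : ℕ}

lemma map_map_conj (A : Matrix (Fin N) (Fin N) ℂ) :
    (A.map (starRingEnd ℂ)).map (starRingEnd ℂ) = A := by
  ext i j; simp [Matrix.map_apply]

lemma diag_mem (i j : Fin N) (hij : i ≠ j) :
    diagonal (fun k => (if k = i then Complex.I else 1) * (if k = j then -Complex.I else 1))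
      ∈ Matrix.specialUnitaryGroup (Fin N) ℂ := by
  rw [Matrix.mem_specialUnitaryGroup_iff]
  constructor
  · rw [Matrix.mem_unitaryGroup_iff', Matrix.star_eq_conjTranspose,
      Matrix.diagonal_conjTranspose, Matrix.diagonal_mul_diagonal, ← Matrix.diagonal_one,
      Matrix.diagonal_eq_diagonal_iff]
    intro k
    simp only [Pi.mul_apply, Pi.star_apply, RCLike.star_def, _root_.map_mul]
    split_ifs <;> simp [Complex.conj_I] <;> ring
  · rw [Matrix.det_diagonal, Finset.prod_mul_distrib, Finset.prod_ite_eq',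
      Finset.prod_ite_eq']
    simp [Complex.I_mul_I]

lemma perm_mem (σ : Equiv.Perm (Fin N)) :
    σ.permMatrix ℂ ∈ Matrix.unitaryGroup (Fin N) ℂ := by
  rw [Matrix.mem_unitaryGroup_iff']
  have hstar : star (σ.permMatrix ℂ) = σ.symm.toPEquiv.toMatrix := by
    rw [Equiv.toPEquiv_symm, PEquiv.toMatrix_symm]
    ext i j
    simp [Matrix.star_eq_conjTranspose, Matrix.conjTranspose_apply, PEquiv.toMatrix_apply,
      apply_ite (starRingEnd ℂ)]
  rw [hstar]
  show σ.symm.toPEquiv.toMatrix * σ.toPEquiv.toMatrix = 1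
  rw [← PEquiv.toMatrix_trans, ← Equiv.toPEquiv_trans, Equiv.symm_trans_self,
    Equiv.toPEquiv_refl, PEquiv.toMatrix_refl]

lemma diagpm_mem (i : Fin N) :
    diagonal (fun k => if k = i then (-1 : ℂ) else 1) ∈ Matrix.unitaryGroup (Fin N) ℂ := by
  rw [Matrix.mem_unitaryGroup_iff', Matrix.star_eq_conjTranspose,
    Matrix.diagonal_conjTranspose, Matrix.diagonal_mul_diagonal, ← Matrix.diagonal_one,
    Matrix.diagonal_eq_diagonal_iff]
  intro k
  simp only [Pi.mul_apply, Pi.star_apply, RCLike.star_def]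
  split_ifs <;> simp

lemma swap_mem (i j : Fin N) (hij : i ≠ j) :
    (Equiv.swap i j).permMatrix ℂ * diagonal (fun k => if k = i then (-1:ℂ) else 1)
      ∈ Matrix.specialUnitaryGroup (Fin N) ℂ := by
  rw [Matrix.mem_specialUnitaryGroup_iff]
  refine ⟨Submonoid.mul_mem _ (perm_mem _) (diagpm_mem i), ?_⟩
  rw [Matrix.det_mul, Matrix.det_permutation, Matrix.det_diagonal, Finset.prod_ite_eq',
    Equiv.Perm.sign_swap hij]
  simp

lemma scalar_of_commute (hN : 0 < N) (C : Matrix (Fin N) (Fin N) ℂ)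
    (h : ∀ A ∈ Matrix.specialUnitaryGroup (Fin N) ℂ, C * A = A * C) :
    ∃ l : ℂ, C = l • 1 := by
  have hoff : ∀ i j : Fin N, i ≠ j → C i j = 0 := by
    intro i j hij
    have h2 := congrFun (congrFun (h _ (diag_mem i j hij)) i) j
    rw [Matrix.mul_diagonal, Matrix.diagonal_mul] at h2
    simp only [if_pos rfl, if_neg hij, if_neg (Ne.symm hij), if_true, eq_self_iff_true,
      one_mul, mul_one] at h2
    have h3 : C i j * (2 * Complex.I) = 0 := by linear_combination -h2
    simpa [Complex.I_ne_zero] using h3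
  have hdiag : ∀ i j : Fin N, C i i = C j j := by
    intro i j
    by_cases hij : i = j
    · rw [hij]
    have h2 := h _ (swap_mem i j hij)
    rw [← mul_assoc, PEquiv.mul_toMatrix_toPEquiv, mul_assoc,
      PEquiv.toMatrix_toPEquiv_mul] at h2
    have h3 := congrFun (congrFun h2 i) j
    rw [Matrix.mul_diagonal, Matrix.submatrix_apply, Matrix.submatrix_apply] at h3
    rw [Equiv.symm_swap, Equiv.swap_apply_right, Equiv.swap_apply_left] at h3
    rw [Matrix.diagonal_mul] at h3
    simp only [id, if_neg (Ne.symm hij)] at h3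
    simpa using h3
  refine ⟨C ⟨0, hN⟩ ⟨0, hN⟩, ?_⟩
  ext i j
  by_cases hij : i = j
  · subst hij
    rw [hdiag i ⟨0, hN⟩]
    simp [Matrix.one_apply]
  · rw [hoff i j hij]
    simp [Matrix.one_apply, hij]

end Stmt12Aux

theorem stmt_12 (N : ℕ) (U V : Matrix (Fin N) (Fin N) ℂ)
    (hU : U ∈ Matrix.specialUnitaryGroup (Fin N) ℂ)
    (hV : V ∈ Matrix.specialUnitaryGroup (Fin N) ℂ) :
    (∀ A ∈ Matrix.specialUnitaryGroup (Fin N) ℂ,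
        U * ((U * A.map (starRingEnd ℂ) * V).map (starRingEnd ℂ)) * V = A) ↔
      ((U = Uᵀ ∧ V = Vᵀ) ∨ (U = -Uᵀ ∧ V = -Vᵀ ∧ Even N)) := by
  rcases Nat.eq_zero_or_pos N with hN | hN
  · subst hN
    constructor
    · intro _
      exact Or.inl ⟨by ext i; exact i.elim0, by ext i; exact i.elim0⟩
    · intro _ A _
      ext i; exact i.elim0
  obtain ⟨hUu, hUd⟩ := Matrix.mem_specialUnitaryGroup_iff.mp hU
  obtain ⟨hVu, hVd⟩ := Matrix.mem_specialUnitaryGroup_iff.mp hV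
  have hUsU : U * star U = 1 := Matrix.mem_unitaryGroup_iff.mp hUu
  have hsUU : star U * U = 1 := Matrix.mem_unitaryGroup_iff'.mp hUu
  have hVsV : V * star V = 1 := Matrix.mem_unitaryGroup_iff.mp hVu
  have hsVV : star V * V = 1 := Matrix.mem_unitaryGroup_iff'.mp hVu
  set c := starRingEnd ℂ with hc
  have hmap : ∀ A : Matrix (Fin N) (Fin N) ℂ,
      (U * A.map c * V).map c = U.map c * A * V.map c := by
    intro A
    rw [Matrix.map_mul, Matrix.map_mul, Stmt12Aux.map_map_conj]
  constructor
  · intro h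
    have hA : ∀ A ∈ Matrix.specialUnitaryGroup (Fin N) ℂ,
        (U * U.map c) * A * (V.map c * V) = A := by
      intro A hAm
      have h1 := h A hAm
      rw [hmap] at h1
      calc (U * U.map c) * A * (V.map c * V)
          = U * (U.map c * A * V.map c) * V := by noncomm_ring
        _ = A := h1
    have h1 : (U * U.map c) * (V.map c * V) = 1 := by
      simpa using hA 1 (one_mem _)
    have h1' : (V.map c * V) * (U * U.map c) = 1 := mul_eq_one_comm.mp h1
    have hcomm : ∀ A ∈ Matrix.specialUnitaryGroup (Fin N) ℂ,
        (U * U.map c) * A = A * (U * U.map c) := by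
      intro A hAm
      calc (U * U.map c) * A
          = (U * U.map c) * A * ((V.map c * V) * (U * U.map c)) := by rw [h1', mul_one]
        _ = ((U * U.map c) * A * (V.map c * V)) * (U * U.map c) := by noncomm_ring
        _ = A * (U * U.map c) := by rw [hA A hAm]
    obtain ⟨l, hl⟩ := Stmt12Aux.scalar_of_commute hN _ hcomm
    -- U.map c = l • star U
    have hUc : U.map c = l • star U := by
      calc U.map c = (star U * U) * U.map c := by rw [hsUU, one_mul]
        _ = star U * (U * U.map c) := by rw [mul_assoc]
        _ = star U * (l • 1) := by rw [hl]
        _ = l • star U := by rw [Matrix.mul_smul, mul_one]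
    have hUe : ∀ i j, U i j = c l * U j i := by
      intro i j
      have h2 := congrFun (congrFun hUc i) j
      rw [Matrix.map_apply, Matrix.smul_apply, Matrix.star_eq_conjTranspose,
        Matrix.conjTranspose_apply] at h2
      have h3 := congrArg c h2
      simpa [hc] using h3
    have hUT : U = c l • Uᵀ := by
      ext i j
      rw [Matrix.smul_apply, Matrix.transpose_apply]
      exact hUe i j
    have hUne : U ≠ 0 := by
      intro h0
      rw [h0, (haveI := Fin.pos_iff_nonempty.mp hN; Matrix.det_zero)] at hUd
      exact zero_ne_one hUd
    have hll : c l * c l = 1 := by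
      have hT : Uᵀ = c l • U := by
        calc Uᵀ = (c l • Uᵀ)ᵀ := by rw [← hUT]
          _ = c l • U := by rw [Matrix.transpose_smul, Matrix.transpose_transpose]
      have h2 : U = (c l * c l) • U := by
        calc U = c l • Uᵀ := hUT
          _ = c l • (c l • U) := by rw [hT]
          _ = (c l * c l) • U := smul_smul _ _ _
      by_contra hne
      have h3 : ((1 : ℂ) - c l * c l) • U = 0 := by
        rw [sub_smul, one_smul, ← h2, sub_self]
      rcases smul_eq_zero.mp h3 with h4 | h4
      · exact hne (by linear_combination -h4)
      · exact hUne h4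
    have hl2 : l * l = 1 := by
      have := congrArg c hll
      simpa [hc] using this
    -- V part
    have hVc2 : V.map c * V = l • 1 := by
      have h2 : l • (V.map c * V) = 1 := by
        have h3 := h1
        rw [hl, smul_mul_assoc, one_mul] at h3
        exact h3
      calc V.map c * V = (l * l) • (V.map c * V) := by rw [hl2, one_smul]
        _ = l • (l • (V.map c * V)) := by rw [smul_smul]
        _ = l • (1 : Matrix (Fin N) (Fin N) ℂ) := by rw [h2]
    have hVcs : V.map c = l • star V := by
      calc V.map c = V.map c * (V * star V) := by rw [hVsV, mul_one]
        _ = (V.map c * V) * star V := by rw [mul_assoc]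
        _ = (l • 1) * star V := by rw [hVc2]
        _ = l • star V := by rw [smul_mul_assoc, one_mul]
    have hVe : ∀ i j, V i j = c l * V j i := by
      intro i j
      have h2 := congrFun (congrFun hVcs i) j
      rw [Matrix.map_apply, Matrix.smul_apply, Matrix.star_eq_conjTranspose,
        Matrix.conjTranspose_apply] at h2
      have h3 := congrArg c h2
      simpa [hc] using h3
    have hVT : V = c l • Vᵀ := by
      ext i j
      rw [Matrix.smul_apply, Matrix.transpose_apply]
      exact hVe i j
    rcases mul_self_eq_one_iff.mp hll with he | he
    · refine Or.inl ⟨?_, ?_⟩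
      · conv_lhs => rw [hUT]
        rw [he, one_smul]
      · conv_lhs => rw [hVT]
        rw [he, one_smul]
    · have hEven : Even N := by
        have h2 := congrArg Matrix.det hUT
        rw [Matrix.det_smul, Matrix.det_transpose, hUd, mul_one, Fintype.card_fin, he] at h2
        exact (neg_one_pow_eq_one_iff_even (by norm_num : (-1 : ℂ) ≠ 1)).mp h2.symm
      refine Or.inr ⟨?_, ?_, hEven⟩
      · conv_lhs => rw [hUT]
        rw [he, neg_one_smul]
      · conv_lhs => rw [hVT]
        rw [he, neg_one_smul]
  · intro h A hAm
    rw [hmap]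
    rcases h with ⟨hU1, hV1⟩ | ⟨hU1, hV1, _⟩
    · have hUc : U.map c = star U := by
        ext i j
        rw [Matrix.map_apply, Matrix.star_eq_conjTranspose, Matrix.conjTranspose_apply,
          ← starRingEnd_apply, ← hc]
        exact congrArg c ((congrFun (congrFun hU1 i) j).trans (Matrix.transpose_apply U i j))
      have hVc : V.map c = star V := by
        ext i j
        rw [Matrix.map_apply, Matrix.star_eq_conjTranspose, Matrix.conjTranspose_apply,
          ← starRingEnd_apply, ← hc]
        exact congrArg c ((congrFun (congrFun hV1 i) j).trans (Matrix.transpose_apply V i j))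
      rw [hUc, hVc]
      calc U * (star U * A * star V) * V
          = (U * star U) * A * (star V * V) := by noncomm_ring
        _ = A := by rw [hUsU, hsVV, one_mul, mul_one]
    · have hUc : U.map c = -star U := by
        ext i j
        have h5 : U i j = -U j i := by
          refine (congrFun (congrFun hU1 i) j).trans ?_
          simp [Matrix.neg_apply]
        rw [Matrix.map_apply, Matrix.neg_apply, Matrix.star_eq_conjTranspose,
          Matrix.conjTranspose_apply, ← starRingEnd_apply, ← hc, h5, map_neg]
      have hVc : V.map c = -star V := by
        ext i j
        have h5 : V i j = -V j i := by
          refine (congrFun (congrFun hV1 i) j).trans ?_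
          simp [Matrix.neg_apply]
        rw [Matrix.map_apply, Matrix.neg_apply, Matrix.star_eq_conjTranspose,
          Matrix.conjTranspose_apply, ← starRingEnd_apply, ← hc, h5, map_neg]
      rw [hUc, hVc]
      calc U * (-star U * A * -star V) * V
          = (U * star U) * A * (star V * V) := by noncomm_ring
        _ = A := by rw [hUsU, hsVV, one_mul, mul_one]
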